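/- Let V be a real vector space of finite dimension m and let k be an integer with 0 < k < m. If ω is an alternating k-form on V such that ω(A v₁, …, A v_k) = ω(v₁, …, v_k) for every linear automorphism A of V with det A = 1, then ω = 0. -/

import Mathlib

/-- an alternating `k`-form (`0 < k < m = dim V`) on a finite-dimensional
real vector space which is invariant under every automorphism of determinant `1` vanishes. -/
theorem stmt2 (m k : ℕ) (hk : 0 < k) (hkm : k < m) (V : Type*) [AddCommGroup V]
    [Module ℝ V] [FiniteDimensional ℝ V] (hdim : Module.finrank ℝ V = m)
    (ω : V [⋀^Fin k]→ₗ[ℝ] ℝ)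
    (hinv : ∀ A : V ≃ₗ[ℝ] V, LinearMap.det (A : V →ₗ[ℝ] V) = 1 →
      ∀ v : Fin k → V, ω (fun i => A (v i)) = ω v) :
    ω = 0 := by
  classical
  ext v
  simp only [AlternatingMap.zero_apply]
  by_cases hli : LinearIndependent ℝ v
  · -- extend to a basis
    have hs : LinearIndepOn ℝ id (Set.range v) := hli.linearIndepOn_id
    set t := hs.extend (Set.subset_univ _) with ht
    let b : Module.Basis t ℝ V := Module.Basis.extend hs
    have hvt : Set.range v ⊆ t := hs.subset_extend _
    -- find w ∈ t \ range v
    have hw : ∃ w ∈ t, w ∉ Set.range v := by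
      by_contra h
      push_neg at h
      have htv : t ⊆ Set.range v := h
      have hspan : Submodule.span ℝ (Set.range v) = ⊤ := by
        have := b.span_eq
        rw [Module.Basis.coe_extend, Subtype.range_coe] at this
        exact top_unique (this ▸ Submodule.span_mono htv)
      have : Module.finrank ℝ V ≤ k := by
        have := finrank_span_eq_card hli
        rw [hspan, finrank_top] at this
        simp [this]
      omega
    obtain ⟨w, hwt, hwv⟩ := hw
    haveI : Fintype t := FiniteDimensional.fintypeBasisIndex b
    set j0 : t := ⟨v ⟨0, hk⟩, hvt (Set.mem_range_self _)⟩ with hj0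
    set j1 : t := ⟨w, hwt⟩ with hj1
    have hne : j1 ≠ j0 := by
      intro h
      apply hwv
      rw [Subtype.ext_iff] at h
      exact ⟨_, h.symm⟩
    set d : t → ℝ := fun j => if j = j0 then 2 else if j = j1 then 1/2 else 1 with hd
    set M : Matrix t t ℝ := Matrix.diagonal d with hMdef
    have hdet : M.det = 1 := by
      rw [hMdef, Matrix.det_diagonal,
        ← Finset.mul_prod_erase Finset.univ d (Finset.mem_univ j0),
        ← Finset.mul_prod_erase _ d (Finset.mem_erase.2 ⟨hne, Finset.mem_univ j1⟩),
        Finset.prod_eq_one]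
      · simp [hd, hne]
      · intro x hx
        simp only [Finset.mem_erase] at hx
        simp [hd, hx.1, hx.2.1]
    have hM : IsUnit M.det := by rw [hdet]; exact isUnit_one
    set A := Matrix.toLinearEquiv b M hM with hA
    have hAdet : LinearMap.det (A : V →ₗ[ℝ] V) = 1 := by
      have : (A : V →ₗ[ℝ] V) = Matrix.toLin b b M := by ext x; rfl
      rw [this, LinearMap.det_toLin, hdet]
    have hAb : ∀ j : t, A (b j) = d j • b j := by
      intro j
      show Matrix.toLin b b M (b j) = _
      rw [Matrix.toLin_self]
      simp [hMdef, Matrix.diagonal_apply, ite_smul, Finset.sum_ite_eq]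
    have hAv : (fun i => A (v i)) = Function.update v ⟨0, hk⟩ ((2:ℝ) • v ⟨0, hk⟩) := by
      funext i
      have hmem : v i ∈ t := hvt (Set.mem_range_self i)
      have hb : b ⟨v i, hmem⟩ = v i := Module.Basis.extend_apply_self _ _
      have hAvi : A (v i) = d ⟨v i, hmem⟩ • v i := by
        have h := hAb ⟨v i, hmem⟩
        rw [hb] at h
        exact h
      by_cases h0 : i = ⟨0, hk⟩
      · subst h0
        rw [Function.update_self, hAvi]
        have hj : (⟨v ⟨0, hk⟩, hmem⟩ : t) = j0 := rfl
        rw [hj]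
        simp [hd]
      · rw [Function.update_of_ne h0, hAvi]
        have h1 : (⟨v i, hmem⟩ : t) ≠ j0 := by
          intro h
          rw [Subtype.ext_iff] at h
          exact h0 (hli.injective h)
        have h2 : (⟨v i, hmem⟩ : t) ≠ j1 := by
          intro h
          rw [Subtype.ext_iff] at h
          exact hwv ⟨i, h⟩
        simp [hd, h1, h2]
    have key := hinv A hAdet v
    rw [hAv, AlternatingMap.map_update_smul, Function.update_eq_self, smul_eq_mul] at key
    linarith
  · exact ω.map_linearDependent v hli
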